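/- A 1-bounded pseudometric d on states is a convex bisimulation metric (i.e., for d(s,t) ≤ ε < 1 and s →^a Δ there is Δ' in the convex closure of der(t,a) with K(d)(Δ,Δ') ≤ ε) if and only if for all s,t with d(s,t) ≤ ε < 1, every combined transition s →^a_c Δ can be matched by a combined transition t →^a_c Δ' with K(d)(Δ,Δ') ≤ ε. -/

import Mathlib

open scoped BigOperators

/-- A (full) probability distribution over a finite set `S`. -/
def IsDist {S : Type} [Fintype S] (Δ : S → ℝ) : Prop :=
  (∀ s, 0 ≤ Δ s) ∧ ∑ s, Δ s = 1

/-- A matching (coupling) for a pair of distributions. -/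
def IsMatching {S : Type} [Fintype S] (ω : S × S → ℝ) (Δ Θ : S → ℝ) : Prop :=
  IsDist ω ∧ (∀ s, ∑ t, ω (s, t) = Δ s) ∧ (∀ t, ∑ s, ω (s, t) = Θ t)

/-- The Kantorovich lifting of `d` (primal formulation, via matchings). -/
noncomputable def Kan {S : Type} [Fintype S] (d : S → S → ℝ) (Δ Θ : S → ℝ) : ℝ :=
  sInf {r | ∃ ω : S × S → ℝ, IsMatching ω Δ Θ ∧ r = ∑ p : S × S, d p.1 p.2 * ω p}

/-- The Kantorovich lifting of `d` (dual linear-programming formulation). -/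
noncomputable def KanD {S : Type} [Fintype S] (d : S → S → ℝ) (Δ Θ : S → ℝ) : ℝ :=
  sSup {r | ∃ x : S → ℝ, (∀ s, 0 ≤ x s ∧ x s ≤ 1) ∧ (∀ s t, x s - x t ≤ d s t) ∧
    r = ∑ s, (Δ s - Θ s) * x s}

/-- `d` is a pseudometric. -/
def IsPseudometric {X : Type*} (d : X → X → ℝ) : Prop :=
  (∀ x, d x x = 0) ∧ (∀ x y, d x y = d y x) ∧ ∀ x y z, d x z ≤ d x y + d y z

/-- `d` is `1`-bounded (takes values in `[0,1]`). -/
def Bounded1 {X : Type*} (d : X → X → ℝ) : Prop := ∀ x y, 0 ≤ d x y ∧ d x y ≤ 1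

/-- A probabilistic labelled transition system. -/
structure PLTS (S : Type) (A : Type) where
  trans : S → A → (S → ℝ) → Prop

/-- The set of `a`-successor distributions of state `s`. -/
def der {S A : Type} (T : PLTS S A) (s : S) (a : A) : Set (S → ℝ) := {Δ | T.trans s a Δ}

/-- Image-finiteness of a pLTS. -/
def ImageFinite {S A : Type} (T : PLTS S A) : Prop := ∀ s a, (der T s a).Finite

/-- Every transition target is a (full) distribution. -/
def WellFormed {S A : Type} [Fintype S] (T : PLTS S A) : Prop :=
  ∀ s a Δ, T.trans s a Δ → IsDist Δ

/-- `d` is a state-based bisimulation metric. -/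
def IsSBM {S A : Type} [Fintype S] (T : PLTS S A) (d : S → S → ℝ) : Prop :=
  IsPseudometric d ∧ Bounded1 d ∧
  ∀ s t (ε : ℝ), 0 ≤ ε → ε < 1 → d s t ≤ ε →
    ∀ a Δ, T.trans s a Δ → ∃ Δ', T.trans t a Δ' ∧ Kan d Δ Δ' ≤ ε

/-- The convex closure (set of finite convex combinations) of a set of
distributions. -/
def cc {S : Type} [Fintype S] (P : Set (S → ℝ)) : Set (S → ℝ) :=
  {Δ | ∃ (n : ℕ) (p : Fin n → ℝ) (D : Fin n → S → ℝ),
    (∀ i, 0 ≤ p i) ∧ (∑ i, p i = 1) ∧ (∀ i, D i ∈ P) ∧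
    Δ = fun s => ∑ i, p i * D i s}

section Aux
variable {S : Type} [Fintype S]

lemma mem_cc_self {P : Set (S → ℝ)} {Δ : S → ℝ} (h : Δ ∈ P) : Δ ∈ cc P :=
  ⟨1, fun _ => 1, fun _ => Δ, fun _ => zero_le_one, by simp, fun _ => h, by funext s; simp⟩

lemma cc_convex {P : Set (S → ℝ)} : Convex ℝ (cc P) := by
  intro x hx y hy a b ha hb hab
  obtain ⟨n, p, D, hp, hp1, hD, rfl⟩ := hx
  obtain ⟨m, q, E, hq, hq1, hE, rfl⟩ := hy
  refine ⟨n + m, Fin.addCases (fun i => a * p i) (fun j => b * q j),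
    Fin.addCases D E, ?_, ?_, ?_, ?_⟩
  · intro i
    induction i using Fin.addCases with
    | left i => simpa using mul_nonneg ha (hp i)
    | right j => simpa using mul_nonneg hb (hq j)
  · rw [Fin.sum_univ_add]
    simp only [Fin.addCases_left, Fin.addCases_right, ← Finset.mul_sum, hp1, hq1]
    simpa using hab
  · intro i
    induction i using Fin.addCases with
    | left i => simpa using hD i
    | right j => simpa using hE j
  · funext s
    rw [Pi.add_apply, Pi.smul_apply, Pi.smul_apply, smul_eq_mul, smul_eq_mul,
      Fin.sum_univ_add]
    simp only [Fin.addCases_left, Fin.addCases_right, Finset.mul_sum, mul_assoc]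

lemma cc_comb {P : Set (S → ℝ)} {n : ℕ} {p : Fin n → ℝ} {D : Fin n → S → ℝ}
    (hp : ∀ i, 0 ≤ p i) (hp1 : ∑ i, p i = 1) (hD : ∀ i, D i ∈ cc P) :
    (fun s => ∑ i, p i * D i s) ∈ cc P := by
  have h : ∑ i ∈ Finset.univ, p i • D i ∈ cc P :=
    cc_convex.sum_mem (fun i _ => hp i) hp1 (fun i _ => hD i)
  convert h using 1
  funext s
  simp [Finset.sum_apply]

lemma dist_of_cc {P : Set (S → ℝ)} (hP : ∀ Θ ∈ P, IsDist Θ) {Δ : S → ℝ}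
    (h : Δ ∈ cc P) : IsDist Δ := by
  obtain ⟨n, p, D, hp, hp1, hD, rfl⟩ := h
  constructor
  · intro s
    exact Finset.sum_nonneg fun i _ => mul_nonneg (hp i) ((hP _ (hD i)).1 s)
  · rw [Finset.sum_comm]
    calc ∑ i, ∑ s, p i * D i s = ∑ i : Fin n, p i * ∑ s, D i s := by
          simp [Finset.mul_sum]
      _ = 1 := by
          rw [← hp1]
          exact Finset.sum_congr rfl fun i _ => by rw [(hP _ (hD i)).2, mul_one]

lemma kan_bddBelow {d : S → S → ℝ} (hd0 : ∀ x y, 0 ≤ d x y) (Δ Θ : S → ℝ) :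
    BddBelow {r | ∃ ω : S × S → ℝ, IsMatching ω Δ Θ ∧ r = ∑ p : S × S, d p.1 p.2 * ω p} := by
  refine ⟨0, fun r hr => ?_⟩
  obtain ⟨ω, hω, rfl⟩ := hr
  exact Finset.sum_nonneg fun p _ => mul_nonneg (hd0 _ _) (hω.1.1 p)

lemma matching_prod {Δ Θ : S → ℝ} (hΔ : IsDist Δ) (hΘ : IsDist Θ) :
    IsMatching (fun p : S × S => Δ p.1 * Θ p.2) Δ Θ := by
  refine ⟨⟨fun p => mul_nonneg (hΔ.1 _) (hΘ.1 _), ?_⟩, fun s => ?_, fun t => ?_⟩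
  · rw [Fintype.sum_prod_type]
    simp [← Finset.mul_sum, hΘ.2, hΔ.2]
  · simp [← Finset.mul_sum, hΘ.2]
  · simp [← Finset.sum_mul, hΔ.2]

lemma kan_convex {d : S → S → ℝ} (hd0 : ∀ x y, 0 ≤ d x y) {n : ℕ}
    {p : Fin n → ℝ} (hp : ∀ i, 0 ≤ p i) (hp1 : ∑ i, p i = 1)
    {Δ Θ : Fin n → S → ℝ} (hΔ : ∀ i, IsDist (Δ i)) (hΘ : ∀ i, IsDist (Θ i))
    {ε : ℝ} (hK : ∀ i, Kan d (Δ i) (Θ i) ≤ ε) :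
    Kan d (fun s => ∑ i, p i * Δ i s) (fun s => ∑ i, p i * Θ i s) ≤ ε := by
  refine le_of_forall_pos_le_add fun δ hδ => ?_
  -- choose near-optimal matchings
  have hne : ∀ i, ∃ ω : S × S → ℝ, IsMatching ω (Δ i) (Θ i) ∧
      ∑ q : S × S, d q.1 q.2 * ω q < ε + δ := by
    intro i
    have hne' : Set.Nonempty {r | ∃ ω : S × S → ℝ, IsMatching ω (Δ i) (Θ i) ∧
        r = ∑ q : S × S, d q.1 q.2 * ω q} :=
      ⟨_, _, matching_prod (hΔ i) (hΘ i), rfl⟩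
    obtain ⟨r, ⟨ω, hω, rfl⟩, hr⟩ := Real.lt_sInf_add_pos hne' hδ
    exact ⟨ω, hω, lt_of_lt_of_le hr (add_le_add_left (hK i) δ)⟩
  choose ω hω hcost using hne
  have hmatch : IsMatching (fun q => ∑ i, p i * ω i q)
      (fun s => ∑ i, p i * Δ i s) (fun s => ∑ i, p i * Θ i s) := by
    refine ⟨⟨fun q => Finset.sum_nonneg fun i _ => mul_nonneg (hp i) ((hω i).1.1 q), ?_⟩,
      fun s => ?_, fun t => ?_⟩
    · rw [Finset.sum_comm]
      calc ∑ i, ∑ q : S × S, p i * ω i q = ∑ i : Fin n, p i * ∑ q : S × S, ω i q := by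
            simp [Finset.mul_sum]
        _ = 1 := by
            rw [← hp1]
            exact Finset.sum_congr rfl fun i _ => by rw [(hω i).1.2, mul_one]
    · rw [Finset.sum_comm]
      exact Finset.sum_congr rfl fun i _ => by
        rw [← Finset.mul_sum, (hω i).2.1]
    · rw [Finset.sum_comm]
      exact Finset.sum_congr rfl fun i _ => by
        rw [← Finset.mul_sum, (hω i).2.2]
  have h1 : Kan d (fun s => ∑ i, p i * Δ i s) (fun s => ∑ i, p i * Θ i s) ≤
      ∑ q : S × S, d q.1 q.2 * ∑ i, p i * ω i q :=
    csInf_le (kan_bddBelow hd0 _ _) ⟨_, hmatch, rfl⟩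
  refine h1.trans ?_
  have h2 : ∑ q : S × S, d q.1 q.2 * ∑ i, p i * ω i q
      = ∑ i : Fin n, p i * ∑ q : S × S, d q.1 q.2 * ω i q := by
    simp_rw [Finset.mul_sum]
    rw [Finset.sum_comm]
    refine Finset.sum_congr rfl fun i _ => ?_
    exact Finset.sum_congr rfl fun q _ => by ring
  rw [h2]
  calc ∑ i : Fin n, p i * ∑ q : S × S, d q.1 q.2 * ω i q
      ≤ ∑ i : Fin n, p i * (ε + δ) :=
        Finset.sum_le_sum fun i _ => mul_le_mul_of_nonneg_left (hcost i).le (hp i)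
    _ = ε + δ := by rw [← Finset.sum_mul, hp1, one_mul]

end Aux

/-- `d` is a convex bisimulation metric iff ordinary transitions matched by
combined transitions can be replaced by combined transitions matched by
combined transitions. -/
theorem convex_bisim_metric_iff_combined {S A : Type} [Fintype S] (T : PLTS S A)
    (hwf : WellFormed T)
    (d : S → S → ℝ) (hd : IsPseudometric d) (hb : Bounded1 d) :
    (∀ s t (ε : ℝ), 0 ≤ ε → ε < 1 → d s t ≤ ε →
      ∀ a Δ, T.trans s a Δ → ∃ Δ' ∈ cc (der T t a), Kan d Δ Δ' ≤ ε) ↔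
    (∀ s t (ε : ℝ), 0 ≤ ε → ε < 1 → d s t ≤ ε →
      ∀ a Δ, Δ ∈ cc (der T s a) → ∃ Δ' ∈ cc (der T t a), Kan d Δ Δ' ≤ ε) := by
  constructor
  · intro h s t ε hε0 hε1 hdst a Δ hΔcc
    obtain ⟨n, p, D, hp, hp1, hD, rfl⟩ := hΔcc
    choose Δ' hΔ'cc hΔ'K using fun i => h s t ε hε0 hε1 hdst a (D i) (hD i)
    have hDdist : ∀ i, IsDist (D i) := fun i => hwf s a (D i) (hD i)
    have hΔ'dist : ∀ i, IsDist (Δ' i) :=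
      fun i => dist_of_cc (fun Θ hΘ => hwf t a Θ hΘ) (hΔ'cc i)
    exact ⟨fun s => ∑ i, p i * Δ' i s, cc_comb hp hp1 hΔ'cc,
      kan_convex (fun x y => (hb x y).1) hp hp1 hDdist hΔ'dist hΔ'K⟩
  · intro h s t ε hε0 hε1 hdst a Δ hΔ
    exact h s t ε hε0 hε1 hdst a Δ (mem_cc_self hΔ)
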